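/- For real x ≥ 2 and z ≥ 2, the number of pairs (p, k) with p prime, z < p, and p²·k ≤ x, weighted by the divisor function — namely Σ_{z < p ≤ √x} Σ_{n ≤ x, p² | n} τ(n) — is O((x/z)·log x). -/

import Mathlib

open scoped Classical

lemma tau_sum_le (M : ℕ) :
    (∑ m ∈ Finset.Icc 1 M, ((m.divisors.card : ℝ))) ≤ M * (1 + Real.log M) := by
  have swap : (∑ m ∈ Finset.Icc 1 M, ((m.divisors.card : ℝ)))
      = ∑ d ∈ Finset.Icc 1 M, ((M / d : ℕ) : ℝ) := by
    have key : ∀ m ∈ Finset.Icc 1 M, (m.divisors.card : ℝ)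
        = ∑ d ∈ Finset.Icc 1 M, (if d ∣ m then (1:ℝ) else 0) := by
      intro m hm
      simp only [Finset.mem_Icc] at hm
      rw [Finset.sum_boole]
      congr 2
      ext d
      simp only [Finset.mem_filter, Finset.mem_Icc, Nat.mem_divisors]
      constructor
      · rintro ⟨hd, -⟩
        exact ⟨⟨Nat.pos_of_dvd_of_pos hd (by omega), le_trans (Nat.le_of_dvd (by omega) hd) hm.2⟩, hd⟩
      · rintro ⟨-, hd⟩
        exact ⟨hd, by omega⟩
    rw [Finset.sum_congr rfl key, Finset.sum_comm]
    refine Finset.sum_congr rfl fun d _ => ?_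
    rw [Finset.sum_boole]
    congr 1
    have : Finset.Icc 1 M = Finset.Ioc 0 M := by ext a; simp; omega
    rw [this, Nat.Ioc_filter_dvd_card_eq_div]
  have hh : ∑ d ∈ Finset.Icc 1 M, ((d:ℝ))⁻¹ ≤ 1 + Real.log M := by
    have h := harmonic_le_one_add_log M
    rw [harmonic_eq_sum_Icc] at h
    push_cast at h
    exact h
  rw [swap]
  calc ∑ d ∈ Finset.Icc 1 M, ((M / d : ℕ) : ℝ)
      ≤ ∑ d ∈ Finset.Icc 1 M, (M : ℝ) * (d : ℝ)⁻¹ := by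
        refine Finset.sum_le_sum fun d hd => ?_
        simp only [Finset.mem_Icc] at hd
        rw [← div_eq_mul_inv, le_div_iff₀ (by exact_mod_cast hd.1)]
        exact_mod_cast Nat.div_mul_le_self M d
    _ = (M : ℝ) * ∑ d ∈ Finset.Icc 1 M, ((d:ℝ))⁻¹ := by rw [← Finset.mul_sum]
    _ ≤ M * (1 + Real.log M) :=
        mul_le_mul_of_nonneg_left hh (Nat.cast_nonneg M)

lemma tau_mul_le {p : ℕ} (hp : p.Prime) (m : ℕ) :
    ((p ^ 2 * m).divisors.card : ℝ) ≤ 3 * m.divisors.card := by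
  have h := Nat.divisors_mul (p ^ 2) m
  have hcard : (p ^ 2 * m).divisors.card ≤ (p ^ 2).divisors.card * m.divisors.card := by
    rw [h]; exact Finset.card_mul_le
  have h3 : (p ^ 2).divisors.card = 3 := by
    rw [Nat.divisors_prime_pow hp, Finset.card_map, Finset.card_range]
  rw [h3] at hcard
  exact_mod_cast hcard

lemma inner_sum_eq {p : ℕ} (hp : 0 < p) (N : ℕ) :
    (∑ n ∈ Finset.filter (fun n : ℕ => p ^ 2 ∣ n) (Finset.Icc 1 N),
      ((n.divisors.card : ℝ)))
    = ∑ m ∈ Finset.Icc 1 (N / p ^ 2), (((p ^ 2 * m).divisors.card : ℝ)) := by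
  have hq : 0 < p ^ 2 := pow_pos hp 2
  refine Finset.sum_nbij' (fun n => n / p ^ 2) (fun m => p ^ 2 * m) ?_ ?_ ?_ ?_ ?_
  · intro n hn
    simp only [Finset.mem_filter, Finset.mem_Icc] at hn
    obtain ⟨⟨h1, h2⟩, hdvd⟩ := hn
    simp only [Finset.mem_Icc]
    constructor
    · exact Nat.one_le_div_iff hq |>.mpr (Nat.le_of_dvd (by omega) hdvd)
    · exact Nat.div_le_div_right h2
  · intro m hm
    simp only [Finset.mem_Icc] at hm
    simp only [Finset.mem_filter, Finset.mem_Icc]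
    refine ⟨⟨Nat.mul_pos hq hm.1, ?_⟩, Dvd.intro m rfl⟩
    calc p ^ 2 * m ≤ p ^ 2 * (N / p ^ 2) := by exact Nat.mul_le_mul_left _ hm.2
      _ ≤ N := Nat.mul_div_le N (p ^ 2)
  · intro n hn
    simp only [Finset.mem_filter] at hn
    exact Nat.mul_div_cancel' hn.2
  · intro m hm
    exact Nat.mul_div_cancel_left m hq
  · intro n hn
    simp only [Finset.mem_filter] at hn
    rw [Nat.mul_div_cancel' hn.2]

lemma inner_bound {p N : ℕ} (hp : p.Prime) (hN : 1 ≤ N) :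
    (∑ n ∈ Finset.filter (fun n : ℕ => p ^ 2 ∣ n) (Finset.Icc 1 N),
      ((n.divisors.card : ℝ)))
    ≤ 3 * ((N / p ^ 2 : ℕ) : ℝ) * (1 + Real.log N) := by
  set M := N / p ^ 2 with hM
  have hMN : M ≤ N := Nat.div_le_self N (p ^ 2)
  have hlog : Real.log M ≤ Real.log N := by
    rcases Nat.eq_zero_or_pos M with h0 | h1
    · rw [h0]
      simpa using Real.log_nonneg (by exact_mod_cast hN)
    · exact Real.log_le_log (by exact_mod_cast h1) (by exact_mod_cast hMN)
  calc (∑ n ∈ Finset.filter (fun n : ℕ => p ^ 2 ∣ n) (Finset.Icc 1 N),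
        ((n.divisors.card : ℝ)))
      = ∑ m ∈ Finset.Icc 1 M, (((p ^ 2 * m).divisors.card : ℝ)) := inner_sum_eq hp.pos N
    _ ≤ ∑ m ∈ Finset.Icc 1 M, 3 * ((m.divisors.card : ℝ)) :=
        Finset.sum_le_sum fun m _ => tau_mul_le hp m
    _ = 3 * ∑ m ∈ Finset.Icc 1 M, ((m.divisors.card : ℝ)) := by rw [Finset.mul_sum]
    _ ≤ 3 * (M * (1 + Real.log M)) := by
        have := tau_sum_le M
        linarith
    _ ≤ 3 * (M * (1 + Real.log N)) := by
        have h1 : (0:ℝ) ≤ M := Nat.cast_nonneg M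
        nlinarith
    _ = 3 * ((M : ℕ) : ℝ) * (1 + Real.log N) := by ring

theorem stmt18 :
    ∃ C : ℝ, 0 < C ∧ ∀ x z : ℝ, 2 ≤ x → 2 ≤ z →
      (∑ p ∈ Finset.filter (fun p : ℕ => p.Prime ∧ z < (p : ℝ))
          (Finset.Icc 1 ⌊Real.sqrt x⌋₊),
        ∑ n ∈ Finset.filter (fun n : ℕ => p ^ 2 ∣ n) (Finset.Icc 1 ⌊x⌋₊),
          ((n.divisors.card : ℝ))) ≤ C * (x / z) * Real.log x := by
  refine ⟨18, by norm_num, fun x z hx hz => ?_⟩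
  set N := ⌊x⌋₊ with hNdef
  have hN2 : 2 ≤ N := Nat.le_floor (by exact_mod_cast hx)
  have hN1 : 1 ≤ N := by omega
  have hNx : (N : ℝ) ≤ x := Nat.floor_le (by linarith)
  have hx0 : (0:ℝ) < x := by linarith
  have hz0 : (0:ℝ) < z := by linarith
  have hlogx : Real.log (N:ℝ) ≤ Real.log x :=
    Real.log_le_log (by exact_mod_cast hN1) hNx
  have hlogx0 : (0:ℝ) < Real.log x := Real.log_pos (by linarith)
  have hlog2 : (1:ℝ) ≤ 2 * Real.log x := by
    have h2 : Real.log 2 ≤ Real.log x := Real.log_le_log (by norm_num) hx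
    have := Real.log_two_gt_d9
    linarith
  set P := Finset.filter (fun p : ℕ => p.Prime ∧ z < (p : ℝ))
      (Finset.Icc 1 ⌊Real.sqrt x⌋₊) with hP
  -- step 1: bound each inner sum
  have step1 : (∑ p ∈ P,
        ∑ n ∈ Finset.filter (fun n : ℕ => p ^ 2 ∣ n) (Finset.Icc 1 N),
          ((n.divisors.card : ℝ)))
      ≤ ∑ p ∈ P, 3 * x * (1 + Real.log x) * (((p:ℝ) ^ 2)⁻¹) := by
    refine Finset.sum_le_sum fun p hp => ?_
    simp only [hP, Finset.mem_filter, Finset.mem_Icc] at hp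
    obtain ⟨⟨hp1, -⟩, hprime, -⟩ := hp
    have hpp : (0:ℝ) < (p:ℝ) ^ 2 := by
      have : 0 < p := hprime.pos
      positivity
    calc (∑ n ∈ Finset.filter (fun n : ℕ => p ^ 2 ∣ n) (Finset.Icc 1 N),
          ((n.divisors.card : ℝ)))
        ≤ 3 * ((N / p ^ 2 : ℕ) : ℝ) * (1 + Real.log N) := inner_bound hprime hN1
      _ ≤ 3 * (x / (p:ℝ) ^ 2) * (1 + Real.log x) := by
          have hdiv : ((N / p ^ 2 : ℕ) : ℝ) ≤ x / (p:ℝ) ^ 2 := by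
            calc ((N / p ^ 2 : ℕ) : ℝ) ≤ (N : ℝ) / ((p:ℝ) ^ 2) := by
                  rw [le_div_iff₀ hpp]
                  exact_mod_cast Nat.div_mul_le_self N (p ^ 2)
              _ ≤ x / (p:ℝ) ^ 2 := by
                  gcongr
          have h1 : (0:ℝ) ≤ 1 + Real.log N := by
            have : (0:ℝ) ≤ Real.log N := Real.log_nonneg (by exact_mod_cast hN1)
            linarith
          have h2 : 1 + Real.log (N:ℝ) ≤ 1 + Real.log x := by linarith
          have h3 : (0:ℝ) ≤ x / (p:ℝ) ^ 2 := by positivity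
          nlinarith [mul_le_mul_of_nonneg_left hdiv (by norm_num : (0:ℝ) ≤ 3)]
      _ = 3 * x * (1 + Real.log x) * (((p:ℝ) ^ 2)⁻¹) := by
          field_simp
  -- step 2: bound the sum of inverse squares
  have step2 : (∑ p ∈ P, (((p:ℝ) ^ 2)⁻¹)) ≤ 2 / z := by
    have hsub : P ⊆ Finset.Ioo ⌊z⌋₊ (⌊Real.sqrt x⌋₊ + 1) := by
      intro p hp
      simp only [hP, Finset.mem_filter, Finset.mem_Icc] at hp
      obtain ⟨⟨-, hple⟩, -, hzp⟩ := hp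
      simp only [Finset.mem_Ioo]
      exact ⟨(Nat.floor_lt (le_of_lt hz0)).mpr hzp, by omega⟩
    calc (∑ p ∈ P, (((p:ℝ) ^ 2)⁻¹))
        ≤ ∑ i ∈ Finset.Ioo ⌊z⌋₊ (⌊Real.sqrt x⌋₊ + 1), (((i:ℝ) ^ 2)⁻¹) := by
          refine Finset.sum_le_sum_of_subset_of_nonneg hsub fun i _ _ => by positivity
      _ ≤ 2 / ((⌊z⌋₊ : ℝ) + 1) := sum_Ioo_inv_sq_le _ _
      _ ≤ 2 / z := by
          apply div_le_div_of_nonneg_left (by norm_num) hz0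
          have := Nat.lt_floor_add_one z
          linarith
  -- combine
  have hC : (0:ℝ) ≤ 3 * x * (1 + Real.log x) := by nlinarith
  calc (∑ p ∈ P,
        ∑ n ∈ Finset.filter (fun n : ℕ => p ^ 2 ∣ n) (Finset.Icc 1 N),
          ((n.divisors.card : ℝ)))
      ≤ ∑ p ∈ P, 3 * x * (1 + Real.log x) * (((p:ℝ) ^ 2)⁻¹) := step1
    _ = 3 * x * (1 + Real.log x) * (∑ p ∈ P, (((p:ℝ) ^ 2)⁻¹)) := by
        rw [Finset.mul_sum]
    _ ≤ 3 * x * (1 + Real.log x) * (2 / z) := by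
        exact mul_le_mul_of_nonneg_left step2 hC
    _ ≤ 18 * (x / z) * Real.log x := by
        have h1 : 1 + Real.log x ≤ 3 * Real.log x := by linarith
        have h2 : 3 * x * (1 + Real.log x) * (2 / z) = 6 * (x / z) * (1 + Real.log x) := by
          field_simp; ring
        rw [h2]
        have hxz : (0:ℝ) ≤ x / z := by positivity
        nlinarith
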